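/- Let G be a 2-connected simple graph of order n ≥ 6 such that every edge of G lies in a triangle. Then the number of edges of G satisfies e(G) ≥ ⌈3n/2⌉. -/

import Mathlib

/-- Number of edges of a simple graph. -/
noncomputable def numEdges {V : Type*} (G : SimpleGraph V) : ℕ := Nat.card G.edgeSet

/-- Every edge of `G` lies in a triangle. -/
def EveryEdgeInTriangle {V : Type*} (G : SimpleGraph V) : Prop :=
  ∀ ⦃u v : V⦄, G.Adj u v → ∃ w, G.Adj u w ∧ G.Adj v w

/-- `G` is 2-connected: it has at least 3 vertices and deleting any single vertex
leaves a connected graph. -/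
def TwoConnected {V : Type*} (G : SimpleGraph V) : Prop :=
  3 ≤ Nat.card V ∧ ∀ v : V, (G.induce ({v}ᶜ : Set V)).Connected

/-- `G` is 3-connected: it has at least 4 vertices and deleting any set of at most 2
vertices leaves a connected graph. -/
def ThreeConnected {V : Type*} (G : SimpleGraph V) : Prop :=
  4 ≤ Nat.card V ∧ ∀ S : Set V, S.ncard ≤ 2 → (G.induce (Sᶜ : Set V)).Connected

/-- `G` is edge-pancyclic: every edge lies in a cycle of each length `k` with `3 ≤ k ≤ |V|`. -/
def EdgePancyclic {V : Type*} (G : SimpleGraph V) : Prop :=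
  ∀ k : ℕ, 3 ≤ k → k ≤ Nat.card V → ∀ ⦃u v : V⦄, G.Adj u v →
    ∃ c : G.Walk u u, c.IsCycle ∧ c.length = k ∧ s(u, v) ∈ c.edges

/-- Base relation for the graph `A_n` (`n = 2q`): vertices `inl i` are the cycle
vertices `vᵢ`, vertices `inr i` are the added vertices `uᵢ`; `vᵢ ~ vᵢ₊₁`,
`uᵢ ~ vᵢ` and `uᵢ ~ vᵢ₊₁`. -/
def ARel (q : ℕ) : (ZMod q ⊕ ZMod q) → (ZMod q ⊕ ZMod q) → Prop :=
  fun x y => match x, y with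
    | Sum.inl a, Sum.inl b => a = b + 1
    | Sum.inr a, Sum.inl b => b = a ∨ b = a + 1
    | _, _ => False

/-- The graph `A_n` where `n = 2q`. -/
def graphA (q : ℕ) : SimpleGraph (ZMod q ⊕ ZMod q) := SimpleGraph.fromRel (ARel q)

/-- The graph `F_n` where `n = 2q + 1`: `A_{n-1}` plus a new vertex (`none`)
adjacent to `v₁` and `v₂`. -/
def graphF (q : ℕ) : SimpleGraph (Option (ZMod q ⊕ ZMod q)) :=
  SimpleGraph.fromRel (fun x y => match x, y with
    | some a, some b => ARel q a b
    | none, some w => w = Sum.inl 1 ∨ w = Sum.inl 2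
    | _, _ => False)

/-- The graph `G_n` where `n = 2q + 1`: `A_{n-1}` plus a new vertex (`none`)
adjacent to `u₁` and `v₁`. -/
def graphG (q : ℕ) : SimpleGraph (Option (ZMod q ⊕ ZMod q)) :=
  SimpleGraph.fromRel (fun x y => match x, y with
    | some a, some b => ARel q a b
    | none, some w => w = Sum.inr 1 ∨ w = Sum.inl 1
    | _, _ => False)

/-- The graph `H_n` where `n = 2q + 1`: `A_{n-1}` with the edge `v₁v₂` subdivided by a
new vertex (`none`), which is moreover joined to `u₁`. -/
def graphH (q : ℕ) : SimpleGraph (Option (ZMod q ⊕ ZMod q)) :=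
  SimpleGraph.fromRel (fun x y => match x, y with
    | some (Sum.inl a), some (Sum.inl b) =>
        a = b + 1 ∧ ¬(a = 2 ∧ b = 1) ∧ ¬(a = 1 ∧ b = 2)
    | some a, some b => ARel q a b
    | none, some w => w = Sum.inl 1 ∨ w = Sum.inl 2 ∨ w = Sum.inr 1
    | _, _ => False)

/-- The wheel graph of order `n`: the hub `none` joined to every vertex of the
cycle `C_{n-1}` on `ZMod (n-1)`. -/
def wheelGraph (n : ℕ) : SimpleGraph (Option (ZMod (n - 1))) :=
  SimpleGraph.fromRel (fun x y => match x, y with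
    | some a, some b => a = b + 1
    | none, some _ => True
    | _, _ => False)
section AuxProof
open Finset

variable {V : Type*}

lemma closure_lemma [Fintype V] [DecidableEq V] (G : SimpleGraph V)
    (t : V) (hconn : (G.induce ({t}ᶜ : Set V)).Connected)
    (A : Finset V) (hA : A.Nonempty) (ht : t ∉ A)
    (hcl : ∀ a ∈ A, ∀ b, G.Adj a b → b ∈ A ∨ b = t) :
    ∀ b, b ≠ t → b ∈ A := by
  obtain ⟨a0, ha0⟩ := hA
  have key : ∀ (x y : ({t}ᶜ : Set V)), (G.induce ({t}ᶜ : Set V)).Walk x y →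
      (x : V) ∈ A → (y : V) ∈ A := by
    intro x y w
    induction w with
    | nil => exact id
    | @cons x u y hadj p ih =>
      intro hx
      apply ih
      rcases hcl _ hx _ (by exact hadj) with h' | h'
      · exact h'
      · exact absurd h' (Set.mem_compl_singleton_iff.mp u.2)
  intro b hb
  have ha0t : a0 ≠ t := fun h => ht (h ▸ ha0)
  obtain ⟨w⟩ := hconn.preconnected ⟨a0, by simp [ha0t]⟩ ⟨b, by simp [hb]⟩
  exact key _ _ w ha0

section Main
variable [Fintype V] [DecidableEq V] (G : SimpleGraph V) [DecidableRel G.Adj]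

def Dst : Finset V := univ.filter (fun v => G.degree v = 2)

def aD (w : V) : ℕ := ((G.neighborFinset w) ∩ Dst G).card

def cD (w : V) : ℕ := ((G.neighborFinset w) \ Dst G).card

set_option linter.unusedSectionVars false in
lemma mem_Dst {v : V} : v ∈ Dst G ↔ G.degree v = 2 := by simp [Dst]

lemma aD_add_cD (w : V) : aD G w + cD G w = G.degree w := by
  rw [aD, cD, Finset.card_inter_add_card_sdiff]
  exact G.card_neighborFinset_eq_degree w

lemma card_le_of_closure {t : V} {A : Finset V} (h : ∀ b, b ≠ t → b ∈ A) :
    Fintype.card V ≤ A.card + 1 := by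
  have : (univ : Finset V) ⊆ insert t A := by
    intro b _
    by_cases hb : b = t
    · simp [hb]
    · exact Finset.mem_insert_of_mem (h b hb)
  calc Fintype.card V = (univ : Finset V).card := rfl
    _ ≤ (insert t A).card := Finset.card_le_card this
    _ ≤ A.card + 1 := Finset.card_insert_le t A

variable (hn : 6 ≤ Fintype.card V) (h2 : TwoConnected G) (htri : EveryEdgeInTriangle G)

include hn h2 in
lemma exists_adj : ∀ v : V, ∃ u, G.Adj v u := by
  intro v
  by_contra hno
  push_neg at hno
  obtain ⟨t, ht⟩ := Fintype.exists_ne_of_one_lt_card (by omega) v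
  have hcl : ∀ a ∈ ({v} : Finset V), ∀ b, G.Adj a b → b ∈ ({v} : Finset V) ∨ b = t := by
    intro a ha b hadj
    rw [Finset.mem_singleton] at ha
    exact absurd hadj (ha ▸ hno b)
  have := closure_lemma G t (h2.2 t) {v} ⟨v, Finset.mem_singleton_self v⟩
    (by simpa using ht) hcl
  have := card_le_of_closure this
  simp at this
  omega

include hn h2 htri in
lemma two_le_degree : ∀ v : V, 2 ≤ G.degree v := by
  intro v
  obtain ⟨u, hu⟩ := exists_adj G hn h2 v
  obtain ⟨w, hvw, huw⟩ := htri hu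
  have huw' : u ≠ w := G.ne_of_adj huw
  have : ({u, w} : Finset V) ⊆ G.neighborFinset v := by
    intro x hx
    rcases Finset.mem_insert.mp hx with h | h
    · exact (G.mem_neighborFinset v x).mpr (h ▸ hu)
    · rw [Finset.mem_singleton] at h
      exact (G.mem_neighborFinset v x).mpr (h ▸ hvw)
  calc 2 = ({u, w} : Finset V).card := (Finset.card_pair huw').symm
    _ ≤ (G.neighborFinset v).card := Finset.card_le_card this
    _ = G.degree v := G.card_neighborFinset_eq_degree v

include htri in
lemma partner {v x : V} (hv : v ∈ Dst G) (hx : G.Adj v x) :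
    ∃ y, G.Adj v y ∧ G.Adj x y ∧ G.neighborFinset v = {x, y} := by
  obtain ⟨y, hvy, hxy⟩ := htri hx
  refine ⟨y, hvy, hxy, ?_⟩
  have hxy' : x ≠ y := G.ne_of_adj hxy
  have hsub : ({x, y} : Finset V) ⊆ G.neighborFinset v := by
    intro z hz
    rcases Finset.mem_insert.mp hz with h | h
    · exact (G.mem_neighborFinset v z).mpr (h ▸ hx)
    · rw [Finset.mem_singleton] at h
      exact (G.mem_neighborFinset v z).mpr (h ▸ hvy)
  exact (Finset.eq_of_subset_of_card_le hsub (by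
    rw [G.card_neighborFinset_eq_degree v, (mem_Dst G).mp hv, Finset.card_pair hxy'])).symm

include hn h2 htri in
lemma D_indep {u v : V} (hu : u ∈ Dst G) (hv : v ∈ Dst G) : ¬ G.Adj u v := by
  intro hadj
  obtain ⟨y, huy, hvy, hNu⟩ := partner G htri hu hadj
  have hNv : G.neighborFinset v = {u, y} := by
    have hsub : ({u, y} : Finset V) ⊆ G.neighborFinset v := by
      intro z hz
      rcases Finset.mem_insert.mp hz with h | h
      · exact (G.mem_neighborFinset v z).mpr (h ▸ hadj.symm)
      · rw [Finset.mem_singleton] at h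
        exact (G.mem_neighborFinset v z).mpr (h ▸ hvy)
    exact (Finset.eq_of_subset_of_card_le hsub (by
      rw [G.card_neighborFinset_eq_degree v, (mem_Dst G).mp hv,
        Finset.card_pair (G.ne_of_adj huy)])).symm
  have hyu : y ≠ u := (G.ne_of_adj huy).symm
  have hyv : y ≠ v := (G.ne_of_adj hvy).symm
  have hcl : ∀ a ∈ ({u, v} : Finset V), ∀ b, G.Adj a b → b ∈ ({u, v} : Finset V) ∨ b = y := by
    intro a ha b hab
    rcases Finset.mem_insert.mp ha with h | h
    · subst h
      have : b ∈ G.neighborFinset a := (G.mem_neighborFinset a b).mpr hab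
      rw [hNu] at this
      rcases Finset.mem_insert.mp this with h' | h'
      · exact Or.inl (by simp [h'])
      · exact Or.inr (Finset.mem_singleton.mp h')
    · rw [Finset.mem_singleton] at h
      subst h
      have : b ∈ G.neighborFinset a := (G.mem_neighborFinset a b).mpr hab
      rw [hNv] at this
      rcases Finset.mem_insert.mp this with h' | h'
      · exact Or.inl (by simp [h'])
      · exact Or.inr (Finset.mem_singleton.mp h')
  have := closure_lemma G y (h2.2 y) {u, v} ⟨u, by simp⟩ (by simp [hyu, hyv]) hcl
  have := card_le_of_closure this
  have : ({u, v} : Finset V).card ≤ 2 := Finset.card_le_two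
  omega

end Main

lemma pair_of_mem {α : Type*} [DecidableEq α] {s : Finset α} {y : α}
    (hs : s.card = 2) (hy : y ∈ s) : ∃ z, y ≠ z ∧ s = {y, z} := by
  obtain ⟨a, b, hab, rfl⟩ := Finset.card_eq_two.mp hs
  rcases Finset.mem_insert.mp hy with h | h
  · exact ⟨b, by simp [h, hab], by simp [h]⟩
  · rw [Finset.mem_singleton] at h
    exact ⟨a, by simp [h, Ne.symm hab], by subst h; exact Finset.pair_comm a y⟩

section Main2
variable [Fintype V] [DecidableEq V] (G : SimpleGraph V) [DecidableRel G.Adj]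

def BadP (x : V) : Prop := x ∉ Dst G ∧ aD G x = 1 ∧ cD G x = 2

variable (hn : 6 ≤ Fintype.card V) (h2 : TwoConnected G) (htri : EveryEdgeInTriangle G)

include hn h2 htri in
lemma bad_struct {x : V} (hx : BadP G x) :
    ∃ v y z : V,
      v ∈ Dst G ∧ y ∉ Dst G ∧ z ∉ Dst G ∧
      G.neighborFinset x ∩ Dst G = {v} ∧
      G.neighborFinset x \ Dst G = {y, z} ∧
      G.neighborFinset x = {v, y, z} ∧
      G.neighborFinset v = {x, y} ∧
      y ≠ z ∧ G.Adj x y ∧ G.Adj x z ∧ G.Adj y z ∧ ¬ BadP G y := by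
  obtain ⟨hxD, hax, hcx⟩ := hx
  obtain ⟨v, hNxD⟩ := Finset.card_eq_one.mp hax
  have hvD : v ∈ Dst G := (Finset.mem_inter.mp (hNxD ▸ Finset.mem_singleton_self v)).2
  have hxv : G.Adj x v := (G.mem_neighborFinset x v).mp
    (Finset.mem_inter.mp (hNxD ▸ Finset.mem_singleton_self v)).1
  obtain ⟨y, hvy, hxy, hNv⟩ := partner G htri hvD hxv.symm
  have hyD : y ∉ Dst G := fun hy => D_indep G hn h2 htri hvD hy hvy
  have hymem : y ∈ G.neighborFinset x \ Dst G :=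
    Finset.mem_sdiff.mpr ⟨(G.mem_neighborFinset x y).mpr hxy, hyD⟩
  obtain ⟨z, hyz, hNxW⟩ := pair_of_mem hcx hymem
  have hzmem := hNxW ▸ (Finset.mem_insert_of_mem (Finset.mem_singleton_self z))
  have hxz : G.Adj x z := (G.mem_neighborFinset x z).mp (Finset.mem_sdiff.mp hzmem).1
  have hzD : z ∉ Dst G := (Finset.mem_sdiff.mp hzmem).2
  have hNx : G.neighborFinset x = {v, y, z} := by
    have h0 : (G.neighborFinset x ∩ Dst G) ∪ (G.neighborFinset x \ Dst G) = G.neighborFinset x := by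
      rw [Finset.union_comm]; exact Finset.sdiff_union_inter _ _
    rw [hNxD, hNxW] at h0
    rw [← h0]; rfl
  have hAdjyz : G.Adj y z := by
    obtain ⟨t, hxt, hzt⟩ := htri hxz
    have : t ∈ G.neighborFinset x := (G.mem_neighborFinset x t).mpr hxt
    rw [hNx] at this
    rcases Finset.mem_insert.mp this with h | h
    · subst h
      have : z ∈ G.neighborFinset t := (G.mem_neighborFinset t z).mpr hzt.symm
      rw [hNv] at this
      rcases Finset.mem_insert.mp this with h' | h'
      · exact absurd h' (G.ne_of_adj hxz).symm
      · exact absurd (Finset.mem_singleton.mp h') (Ne.symm hyz)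
    · rcases Finset.mem_insert.mp h with h' | h'
      · exact h' ▸ hzt.symm
      · rw [Finset.mem_singleton] at h'
        exact absurd (h' ▸ hzt) (G.irrefl)
  refine ⟨v, y, z, hvD, hyD, hzD, hNxD, hNxW, hNx, hNv, hyz, hxy, hxz, hAdjyz, ?_⟩
  rintro ⟨hyDn, hay, hcy⟩
  have hvmemy : v ∈ G.neighborFinset y ∩ Dst G :=
    Finset.mem_inter.mpr ⟨(G.mem_neighborFinset y v).mpr hvy.symm, hvD⟩
  have hNyD : G.neighborFinset y ∩ Dst G = {v} := by
    obtain ⟨w, hw⟩ := Finset.card_eq_one.mp hay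
    rw [hw] at hvmemy ⊢
    rw [Finset.mem_singleton] at hvmemy
    rw [hvmemy]
  have hxmemy : x ∈ G.neighborFinset y \ Dst G :=
    Finset.mem_sdiff.mpr ⟨(G.mem_neighborFinset y x).mpr hxy.symm, hxD⟩
  obtain ⟨z', hxz', hNyW⟩ := pair_of_mem hcy hxmemy
  have hz'mem := hNyW ▸ (Finset.mem_insert_of_mem (Finset.mem_singleton_self z'))
  have hyz' : G.Adj y z' := (G.mem_neighborFinset y z').mp (Finset.mem_sdiff.mp hz'mem).1
  have hz'D : z' ∉ Dst G := (Finset.mem_sdiff.mp hz'mem).2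
  have hNy : G.neighborFinset y = {v, x, z'} := by
    have h0 : (G.neighborFinset y ∩ Dst G) ∪ (G.neighborFinset y \ Dst G) = G.neighborFinset y := by
      rw [Finset.union_comm]; exact Finset.sdiff_union_inter _ _
    rw [hNyD, hNyW] at h0
    rw [← h0]; rfl
  have hAdjxz' : G.Adj x z' := by
    obtain ⟨t, hyt, hz't⟩ := htri hyz'
    have : t ∈ G.neighborFinset y := (G.mem_neighborFinset y t).mpr hyt
    rw [hNy] at this
    rcases Finset.mem_insert.mp this with h | h
    · subst h
      have : z' ∈ G.neighborFinset t := (G.mem_neighborFinset t z').mpr hz't.symm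
      rw [hNv] at this
      rcases Finset.mem_insert.mp this with h' | h'
      · exact absurd h' (Ne.symm hxz')
      · rw [Finset.mem_singleton] at h'
        exact absurd (h' ▸ hyz') (G.irrefl)
    · rcases Finset.mem_insert.mp h with h' | h'
      · exact h' ▸ hz't.symm
      · rw [Finset.mem_singleton] at h'
        exact absurd (h' ▸ hz't) (G.irrefl)
  have hz'z : z = z' := by
    have : z' ∈ G.neighborFinset x \ Dst G :=
      Finset.mem_sdiff.mpr ⟨(G.mem_neighborFinset x z').mpr hAdjxz', hz'D⟩
    rw [hNxW] at this
    rcases Finset.mem_insert.mp this with h | h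
    · exact absurd h (G.ne_of_adj hyz').symm
    · exact (Finset.mem_singleton.mp h).symm
  subst hz'z
  -- closure argument: A = {v, x, y}, t = z
  have hzv : z ≠ v := fun h => hzD (h ▸ hvD)
  have hzx : z ≠ x := (G.ne_of_adj hxz).symm
  have hzy : z ≠ y := (G.ne_of_adj hAdjyz).symm
  have hcl : ∀ a ∈ ({v, x, y} : Finset V), ∀ b, G.Adj a b →
      b ∈ ({v, x, y} : Finset V) ∨ b = z := by
    intro a ha b hab
    have hmem := (G.mem_neighborFinset a b).mpr hab
    rcases Finset.mem_insert.mp ha with h | h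
    · subst h
      rw [hNv] at hmem
      rcases Finset.mem_insert.mp hmem with h' | h'
      · exact Or.inl (by simp [h'])
      · exact Or.inl (by simp [Finset.mem_singleton.mp h'])
    · rcases Finset.mem_insert.mp h with h' | h'
      · subst h'
        rw [hNx] at hmem
        rcases Finset.mem_insert.mp hmem with h' | h'
        · exact Or.inl (by simp [h'])
        · rcases Finset.mem_insert.mp h' with h'' | h''
          · exact Or.inl (by simp [h''])
          · exact Or.inr (Finset.mem_singleton.mp h'')
      · rw [Finset.mem_singleton] at h'
        subst h'
        rw [hNy] at hmem
        rcases Finset.mem_insert.mp hmem with h' | h'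
        · exact Or.inl (by simp [h'])
        · rcases Finset.mem_insert.mp h' with h'' | h''
          · exact Or.inl (by simp [h''])
          · exact Or.inr (Finset.mem_singleton.mp h'')
  have hcls := closure_lemma G z (h2.2 z) {v, x, y} ⟨v, by simp⟩
    (by simp only [Finset.mem_insert, Finset.mem_singleton]; push_neg; exact ⟨hzv, hzx, hzy⟩) hcl
  have hcard := card_le_of_closure hcls
  have h3 : ({v, x, y} : Finset V).card ≤ 3 := by
    apply le_trans (Finset.card_insert_le _ _)
    have : ({x, y} : Finset V).card ≤ 2 := Finset.card_le_two
    omega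
  omega

include hn h2 htri in
lemma three_le_degree {w : V} (hw : w ∉ Dst G) : 3 ≤ G.degree w := by
  have := two_le_degree G hn h2 htri w
  have h2' : G.degree w ≠ 2 := fun h => hw ((mem_Dst G).mpr h)
  omega

include hn h2 htri in
lemma cD_pos {w : V} : 1 ≤ cD G w := by
  obtain ⟨u, hu⟩ := exists_adj G hn h2 w
  have hne : (G.neighborFinset w \ Dst G).Nonempty := by
    by_cases huD : u ∈ Dst G
    · obtain ⟨y, huy, hwy, hNu⟩ := partner G htri huD hu.symm
      have hyD : y ∉ Dst G := fun hy => D_indep G hn h2 htri huD hy huy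
      exact ⟨y, Finset.mem_sdiff.mpr ⟨(G.mem_neighborFinset w y).mpr hwy, hyD⟩⟩
    · exact ⟨u, Finset.mem_sdiff.mpr ⟨(G.mem_neighborFinset w u).mpr hu, huD⟩⟩
  exact Finset.card_pos.mpr hne

include hn h2 htri in
lemma book_case {x : V} (hxD : x ∉ Dst G) (hcx : cD G x ≤ 1) :
    3 * Fintype.card V ≤ ∑ v, G.degree v := by
  have hcx1 : cD G x = 1 := le_antisymm hcx (cD_pos G hn h2 htri)
  obtain ⟨y, hNxW⟩ := Finset.card_eq_one.mp hcx1
  have hymem : y ∈ G.neighborFinset x \ Dst G := hNxW ▸ Finset.mem_singleton_self y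
  have hxy : G.Adj x y := (G.mem_neighborFinset x y).mp (Finset.mem_sdiff.mp hymem).1
  have hyD : y ∉ Dst G := (Finset.mem_sdiff.mp hymem).2
  set Dx := G.neighborFinset x ∩ Dst G with hDx
  set k := Dx.card with hk
  have hdegx : G.degree x = k + 1 := by
    have := aD_add_cD G x
    rw [hcx1] at this
    rw [← this]; rfl
  have hNu : ∀ u ∈ Dx, G.neighborFinset u = {x, y} := by
    intro u hu
    have huD : u ∈ Dst G := (Finset.mem_inter.mp hu).2
    have hxu : G.Adj x u := (G.mem_neighborFinset x u).mp (Finset.mem_inter.mp hu).1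
    obtain ⟨p, hup, hxp, hNu⟩ := partner G htri huD hxu.symm
    have hpD : p ∉ Dst G := fun hp => D_indep G hn h2 htri huD hp hup
    have : p ∈ G.neighborFinset x \ Dst G :=
      Finset.mem_sdiff.mpr ⟨(G.mem_neighborFinset x p).mpr hxp, hpD⟩
    rw [hNxW, Finset.mem_singleton] at this
    rw [hNu, this]
  have hxDx : x ∉ Dx := fun h => hxD (Finset.mem_inter.mp h).2
  have hyDx : y ∉ Dx := fun h => hyD (Finset.mem_inter.mp h).2
  have hyx : y ≠ x := (G.ne_of_adj hxy).symm
  have hcl : ∀ a ∈ insert x Dx, ∀ b, G.Adj a b → b ∈ insert x Dx ∨ b = y := by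
    intro a ha b hab
    have hmem := (G.mem_neighborFinset a b).mpr hab
    rcases Finset.mem_insert.mp ha with h | h
    · subst h
      by_cases hbD : b ∈ Dst G
      · exact Or.inl (Finset.mem_insert_of_mem (Finset.mem_inter.mpr ⟨hmem, hbD⟩))
      · have : b ∈ G.neighborFinset a \ Dst G := Finset.mem_sdiff.mpr ⟨hmem, hbD⟩
        rw [hNxW, Finset.mem_singleton] at this
        exact Or.inr this
    · rw [hNu a h] at hmem
      rcases Finset.mem_insert.mp hmem with h' | h'
      · exact Or.inl (by simp [h'])
      · exact Or.inr (Finset.mem_singleton.mp h')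
  have hcls := closure_lemma G y (h2.2 y) (insert x Dx) ⟨x, Finset.mem_insert_self x Dx⟩
    (by simp only [Finset.mem_insert]; push_neg; exact ⟨hyx, hyDx⟩) hcl
  have huniv : (univ : Finset V) = insert y (insert x Dx) := by
    symm; rw [Finset.eq_univ_iff_forall]
    intro b
    by_cases hb : b = y
    · simp [hb]
    · exact Finset.mem_insert_of_mem (hcls b hb)
  have hNy : G.neighborFinset y = insert x Dx := by
    apply Finset.Subset.antisymm
    · intro b hb
      have hby : b ≠ y := fun h => G.irrefl (h ▸ (G.mem_neighborFinset y b).mp hb)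
      have : b ∈ (univ : Finset V) := Finset.mem_univ b
      rw [huniv] at this
      rcases Finset.mem_insert.mp this with h | h
      · exact absurd h hby
      · exact h
    · intro b hb
      rcases Finset.mem_insert.mp hb with h | h
      · exact (G.mem_neighborFinset y b).mpr (h ▸ hxy.symm)
      · have := hNu b h
        exact (G.mem_neighborFinset y b).mpr
          ((G.mem_neighborFinset b y).mp (this ▸ (by simp : y ∈ ({x, y} : Finset V)))).symm
  have hdegy : G.degree y = k + 1 := by
    rw [← G.card_neighborFinset_eq_degree, hNy, Finset.card_insert_of_notMem hxDx]
  have hsum : ∑ v, G.degree v = (k + 1) + ((k + 1) + 2 * k) := by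
    rw [huniv, Finset.sum_insert (by
      simp only [Finset.mem_insert]; push_neg; exact ⟨hyx, hyDx⟩),
      Finset.sum_insert hxDx, hdegy, hdegx]
    congr 1
    congr 1
    have : ∀ u ∈ Dx, G.degree u = 2 := fun u hu => (mem_Dst G).mp (Finset.mem_inter.mp hu).2
    rw [Finset.sum_congr rfl this, Finset.sum_const, smul_eq_mul, mul_comm]
  have hcard : Fintype.card V = k + 2 := by
    rw [← Finset.card_univ, huniv, Finset.card_insert_of_notMem (by
      simp only [Finset.mem_insert]; push_neg; exact ⟨hyx, hyDx⟩),
      Finset.card_insert_of_notMem hxDx]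
  rw [hsum, hcard]
  have hn' := hn
  rw [hcard] at hn'
  omega

include hn h2 htri in
lemma fan_case {x v y z : V} (hbad : BadP G x) (hvD : v ∈ Dst G)
    (hNxD : G.neighborFinset x ∩ Dst G = {v})
    (hNv : G.neighborFinset v = {x, y})
    (hNxW : G.neighborFinset x \ Dst G = {y, z})
    (hcy : cD G y = 2) (hcz : cD G z = 2) :
    3 * Fintype.card V ≤ ∑ w, G.degree w := by
  obtain ⟨hxD, hax, hcx⟩ := hbad
  have hxv : G.Adj x v := (G.mem_neighborFinset x v).mp
    (Finset.mem_inter.mp (hNxD ▸ Finset.mem_singleton_self v)).1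
  have hvy : G.Adj v y := (G.mem_neighborFinset v y).mp
    (hNv ▸ Finset.mem_insert_of_mem (Finset.mem_singleton_self y))
  have hymem : y ∈ G.neighborFinset x \ Dst G :=
    hNxW ▸ Finset.mem_insert_self y {z}
  have hzmem : z ∈ G.neighborFinset x \ Dst G :=
    hNxW ▸ Finset.mem_insert_of_mem (Finset.mem_singleton_self z)
  have hxy : G.Adj x y := (G.mem_neighborFinset x y).mp (Finset.mem_sdiff.mp hymem).1
  have hyD : y ∉ Dst G := (Finset.mem_sdiff.mp hymem).2
  have hxz : G.Adj x z := (G.mem_neighborFinset x z).mp (Finset.mem_sdiff.mp hzmem).1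
  have hzD : z ∉ Dst G := (Finset.mem_sdiff.mp hzmem).2
  have hyz : y ≠ z := by
    intro h
    rw [← h] at hNxW
    rw [cD, hNxW] at hcx
    simp at hcx
  have hNx : G.neighborFinset x = {v, y, z} := by
    have h0 : (G.neighborFinset x ∩ Dst G) ∪ (G.neighborFinset x \ Dst G) = G.neighborFinset x := by
      rw [Finset.union_comm]; exact Finset.sdiff_union_inter _ _
    rw [hNxD, hNxW] at h0
    rw [← h0]; rfl
  have hAdjyz : G.Adj y z := by
    obtain ⟨t, hxt, hzt⟩ := htri hxz
    have : t ∈ G.neighborFinset x := (G.mem_neighborFinset x t).mpr hxt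
    rw [hNx] at this
    rcases Finset.mem_insert.mp this with h | h
    · subst h
      have : z ∈ G.neighborFinset t := (G.mem_neighborFinset t z).mpr hzt.symm
      rw [hNv] at this
      rcases Finset.mem_insert.mp this with h' | h'
      · exact absurd h' (G.ne_of_adj hxz).symm
      · exact absurd (Finset.mem_singleton.mp h') (Ne.symm hyz)
    · rcases Finset.mem_insert.mp h with h' | h'
      · exact h' ▸ hzt.symm
      · rw [Finset.mem_singleton] at h'
        exact absurd (h' ▸ hzt) (G.irrefl)
  have hvy' : v ∈ G.neighborFinset y ∩ Dst G :=
    Finset.mem_inter.mpr ⟨(G.mem_neighborFinset y v).mpr hvy.symm, hvD⟩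
  set U := (G.neighborFinset y ∩ Dst G).erase v with hU
  set k := U.card with hk
  have hUD : ∀ u ∈ U, u ∈ Dst G := fun u hu =>
    (Finset.mem_inter.mp (Finset.mem_of_mem_erase hu)).2
  have hady : aD G y = k + 1 := by
    rw [aD, ← Finset.card_erase_add_one hvy']
  have hNyW : G.neighborFinset y \ Dst G = {x, z} := by
    symm
    apply Finset.eq_of_subset_of_card_le
    · intro b hb
      rcases Finset.mem_insert.mp hb with h | h
      · exact h ▸ Finset.mem_sdiff.mpr ⟨(G.mem_neighborFinset y x).mpr hxy.symm, hxD⟩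
      · rw [Finset.mem_singleton] at h
        exact h ▸ Finset.mem_sdiff.mpr ⟨(G.mem_neighborFinset y z).mpr hAdjyz, hzD⟩
    · rw [(by rfl : (G.neighborFinset y \ Dst G).card = cD G y), hcy]
      exact le_of_eq (Finset.card_pair (G.ne_of_adj hxz)).symm
  have hNu : ∀ u ∈ U, G.neighborFinset u = {y, z} := by
    intro u hu
    have huD := hUD u hu
    have huy : G.Adj u y := ((G.mem_neighborFinset y u).mp
      (Finset.mem_inter.mp (Finset.mem_of_mem_erase hu)).1).symm
    obtain ⟨p, hup, hyp, hNup⟩ := partner G htri huD huy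
    have hpD : p ∉ Dst G := fun hp => D_indep G hn h2 htri huD hp hup
    have hpmem : p ∈ G.neighborFinset y \ Dst G :=
      Finset.mem_sdiff.mpr ⟨(G.mem_neighborFinset y p).mpr hyp, hpD⟩
    rw [hNyW] at hpmem
    rcases Finset.mem_insert.mp hpmem with h | h
    · exfalso
      have : u ∈ G.neighborFinset x ∩ Dst G := Finset.mem_inter.mpr
        ⟨(G.mem_neighborFinset x u).mpr (h ▸ hup).symm, huD⟩
      rw [hNxD, Finset.mem_singleton] at this
      exact (Finset.ne_of_mem_erase hu) this
    · rw [Finset.mem_singleton] at h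
      rw [hNup, h]
  have hvNz : ¬ G.Adj v z := by
    intro hadj
    have : z ∈ G.neighborFinset v := (G.mem_neighborFinset v z).mpr hadj
    rw [hNv] at this
    rcases Finset.mem_insert.mp this with h | h
    · exact (G.ne_of_adj hxz).symm h
    · exact (Ne.symm hyz) (Finset.mem_singleton.mp h)
  have hNzW : G.neighborFinset z \ Dst G = {x, y} := by
    symm
    apply Finset.eq_of_subset_of_card_le
    · intro b hb
      rcases Finset.mem_insert.mp hb with h | h
      · exact h ▸ Finset.mem_sdiff.mpr ⟨(G.mem_neighborFinset z x).mpr hxz.symm, hxD⟩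
      · rw [Finset.mem_singleton] at h
        exact h ▸ Finset.mem_sdiff.mpr ⟨(G.mem_neighborFinset z y).mpr hAdjyz.symm, hyD⟩
    · rw [(by rfl : (G.neighborFinset z \ Dst G).card = cD G z), hcz]
      exact le_of_eq (Finset.card_pair (G.ne_of_adj hxy)).symm
  have hNzD : G.neighborFinset z ∩ Dst G = U := by
    apply Finset.Subset.antisymm
    · intro s hs
      have hsD : s ∈ Dst G := (Finset.mem_inter.mp hs).2
      have hzs : G.Adj z s := (G.mem_neighborFinset z s).mp (Finset.mem_inter.mp hs).1
      obtain ⟨p, hsp, hzp, hNsp⟩ := partner G htri hsD hzs.symm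
      have hpD : p ∉ Dst G := fun hp => D_indep G hn h2 htri hsD hp hsp
      have hpmem : p ∈ G.neighborFinset z \ Dst G :=
        Finset.mem_sdiff.mpr ⟨(G.mem_neighborFinset z p).mpr hzp, hpD⟩
      rw [hNzW] at hpmem
      have hsv : s ≠ v := fun h => hvNz (h ▸ hzs.symm)
      rcases Finset.mem_insert.mp hpmem with h | h
      · exfalso
        have : s ∈ G.neighborFinset x ∩ Dst G := Finset.mem_inter.mpr
          ⟨(G.mem_neighborFinset x s).mpr (h ▸ hsp).symm, hsD⟩
        rw [hNxD, Finset.mem_singleton] at this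
        exact hsv this
      · rw [Finset.mem_singleton] at h
        apply Finset.mem_erase.mpr
        refine ⟨hsv, Finset.mem_inter.mpr ⟨(G.mem_neighborFinset y s).mpr (h ▸ hsp).symm, hsD⟩⟩
    · intro u hu
      have : z ∈ G.neighborFinset u := hNu u hu ▸ Finset.mem_insert_of_mem
        (Finset.mem_singleton_self z)
      exact Finset.mem_inter.mpr ⟨(G.mem_neighborFinset z u).mpr
        ((G.mem_neighborFinset u z).mp this).symm, hUD u hu⟩
  have hNyD : G.neighborFinset y ∩ Dst G = insert v U := (Finset.insert_erase hvy').symm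
  have hNy : G.neighborFinset y = (insert v U) ∪ {x, z} := by
    have h0 : (G.neighborFinset y ∩ Dst G) ∪ (G.neighborFinset y \ Dst G) = G.neighborFinset y := by
      rw [Finset.union_comm]; exact Finset.sdiff_union_inter _ _
    rw [hNyD, hNyW] at h0
    rw [← h0]
  have hNz : G.neighborFinset z = U ∪ {x, y} := by
    have h0 : (G.neighborFinset z ∩ Dst G) ∪ (G.neighborFinset z \ Dst G) = G.neighborFinset z := by
      rw [Finset.union_comm]; exact Finset.sdiff_union_inter _ _
    rw [hNzD, hNzW] at h0
    rw [← h0]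
  set A := insert v (insert x (insert y (insert z U))) with hA
  have hsubA : ∀ a ∈ A, ∀ b, G.Adj a b → b ∈ A := by
    intro a ha b hab
    have hmem := (G.mem_neighborFinset a b).mpr hab
    simp only [hA, Finset.mem_insert] at ha ⊢
    rcases ha with h | h | h | h | h
    · subst h; rw [hNv] at hmem
      rcases Finset.mem_insert.mp hmem with h' | h'
      · exact Or.inr (Or.inl h')
      · exact Or.inr (Or.inr (Or.inl (Finset.mem_singleton.mp h')))
    · subst h; rw [hNx] at hmem
      rcases Finset.mem_insert.mp hmem with h' | h'
      · exact Or.inl h'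
      · rcases Finset.mem_insert.mp h' with h'' | h''
        · exact Or.inr (Or.inr (Or.inl h''))
        · exact Or.inr (Or.inr (Or.inr (Or.inl (Finset.mem_singleton.mp h''))))
    · subst h; rw [hNy] at hmem
      rcases Finset.mem_union.mp hmem with h' | h'
      · rcases Finset.mem_insert.mp h' with h'' | h''
        · exact Or.inl h''
        · exact Or.inr (Or.inr (Or.inr (Or.inr h'')))
      · rcases Finset.mem_insert.mp h' with h'' | h''
        · exact Or.inr (Or.inl h'')
        · exact Or.inr (Or.inr (Or.inr (Or.inl (Finset.mem_singleton.mp h''))))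
    · subst h; rw [hNz] at hmem
      rcases Finset.mem_union.mp hmem with h' | h'
      · exact Or.inr (Or.inr (Or.inr (Or.inr h')))
      · rcases Finset.mem_insert.mp h' with h'' | h''
        · exact Or.inr (Or.inl h'')
        · exact Or.inr (Or.inr (Or.inl (Finset.mem_singleton.mp h'')))
    · rw [hNu a h] at hmem
      rcases Finset.mem_insert.mp hmem with h' | h'
      · exact Or.inr (Or.inr (Or.inl h'))
      · exact Or.inr (Or.inr (Or.inr (Or.inl (Finset.mem_singleton.mp h'))))
  have huniv : (univ : Finset V) = A := by
    symm; rw [Finset.eq_univ_iff_forall]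
    intro t
    by_contra htA
    have hcls := closure_lemma G t (h2.2 t) A ⟨v, by simp [hA]⟩ htA
      (fun a ha b hab => Or.inl (hsubA a ha b hab))
    obtain ⟨r, hr⟩ := exists_adj G hn h2 t
    have hrA : r ∈ A := hcls r (G.ne_of_adj hr).symm
    exact htA (hsubA r hrA t hr.symm)
  -- distinctness
  have hvx : v ≠ x := fun h => hxD (h ▸ hvD)
  have hvy2 : v ≠ y := fun h => hyD (h ▸ hvD)
  have hvz : v ≠ z := fun h => hzD (h ▸ hvD)
  have hvU : v ∉ U := Finset.notMem_erase v _
  have hxU : x ∉ U := fun h => hxD (hUD x h)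
  have hyU : y ∉ U := fun h => hyD (hUD y h)
  have hzU : z ∉ U := fun h => hzD (hUD z h)
  have hxy' : x ≠ y := G.ne_of_adj hxy
  have hxz' : x ≠ z := G.ne_of_adj hxz
  have hx1 : x ∉ insert y (insert z U) := by
    simp only [Finset.mem_insert]; push_neg; exact ⟨hxy', hxz', hxU⟩
  have hy1 : y ∉ insert z U := by
    simp only [Finset.mem_insert]; push_neg; exact ⟨hyz, hyU⟩
  have hv1 : v ∉ insert x (insert y (insert z U)) := by
    simp only [Finset.mem_insert]; push_neg; exact ⟨hvx, hvy2, hvz, hvU⟩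
  have hcardA : A.card = k + 4 := by
    rw [hA, Finset.card_insert_of_notMem hv1, Finset.card_insert_of_notMem hx1,
      Finset.card_insert_of_notMem hy1, Finset.card_insert_of_notMem hzU]
  have hdegv : G.degree v = 2 := (mem_Dst G).mp hvD
  have hdegx : G.degree x = 3 := by
    rw [← G.card_neighborFinset_eq_degree, hNx]
    rw [Finset.card_insert_of_notMem (by
      simp only [Finset.mem_insert, Finset.mem_singleton]; push_neg; exact ⟨hvy2, hvz⟩),
      Finset.card_pair hyz]
  have hdegy : G.degree y = k + 3 := by
    rw [← aD_add_cD G y, hady, hcy]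
  have hdegz : G.degree z = k + 2 := by
    rw [← aD_add_cD G z, (by rw [aD, hNzD] : aD G z = k), hcz]
  have hsum : ∑ w, G.degree w = 2 + (3 + ((k + 3) + ((k + 2) + 2 * k))) := by
    rw [huniv, hA, Finset.sum_insert hv1, Finset.sum_insert hx1, Finset.sum_insert hy1,
      Finset.sum_insert hzU, hdegv, hdegx, hdegy, hdegz]
    congr 2
    have : ∀ u ∈ U, G.degree u = 2 := fun u hu => (mem_Dst G).mp (hUD u hu)
    rw [Finset.sum_congr rfl this, Finset.sum_const, smul_eq_mul, mul_comm]
  have hcard : Fintype.card V = k + 4 := by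
    rw [← Finset.card_univ, huniv, hcardA]
  rw [hsum, hcard]
  have hn' := hn
  rw [hcard] at hn'
  omega

lemma two_mem_unique {α : Type*} [DecidableEq α] {s : Finset α} (hs : s.card = 2)
    {w x x' : α} (hw : w ∈ s) (hx : x ∈ s) (hx' : x' ∈ s)
    (h1 : x ≠ w) (h2 : x' ≠ w) : x = x' := by
  obtain ⟨a, b, hab, rfl⟩ := Finset.card_eq_two.mp hs
  simp only [Finset.mem_insert, Finset.mem_singleton] at hw hx hx'
  rcases hw with rfl | rfl <;> rcases hx with rfl | rfl <;> rcases hx' with rfl | rfl <;>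
    first | rfl | (exfalso; tauto)

def Phi (x w s : V) : Prop :=
  G.Adj w s ∧ s ∈ Dst G ∧ (G.neighborFinset s).card = 2 ∧
  ( (x ∈ G.neighborFinset s ∧ w ∈ G.neighborFinset s ∧ BadP G x)
    ∨ (∃ y, G.neighborFinset s = {y, w} ∧ ¬ BadP G y ∧ y ≠ w ∧
        (G.neighborFinset y \ Dst G).card = 2 ∧
        w ∈ G.neighborFinset y \ Dst G ∧ x ∈ G.neighborFinset y \ Dst G ∧ BadP G x) )

lemma Phi_inj {x x' w s : V} (hw : ¬ BadP G w)
    (h : Phi G x w s) (h' : Phi G x' w s) : x = x' := by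
  obtain ⟨hadj, hsD, hcard, hc⟩ := h
  obtain ⟨-, -, -, hc'⟩ := h'
  have hwmem : w ∈ G.neighborFinset s := by
    exact (G.mem_neighborFinset s w).mpr hadj.symm
  rcases hc with ⟨hx1, hx2, hxB⟩ | ⟨y, hNs, hyB, hyw, hcy, hwy, hxy, hxB⟩ <;>
    rcases hc' with ⟨hx1', hx2', hxB'⟩ | ⟨y', hNs', hyB', hyw', hcy', hwy', hxy', hxB'⟩
  · exact two_mem_unique hcard hwmem hx1 hx1'
      (fun hh => hw (hh ▸ hxB)) (fun hh => hw (hh ▸ hxB'))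
  · -- x type Y, x' type Z
    exfalso
    rw [hNs'] at hx1
    rcases Finset.mem_insert.mp hx1 with hh | hh
    · exact hyB' (hh ▸ hxB)
    · exact hw ((Finset.mem_singleton.mp hh) ▸ hxB)
  · exfalso
    rw [hNs] at hx1'
    rcases Finset.mem_insert.mp hx1' with hh | hh
    · exact hyB (hh ▸ hxB')
    · exact hw ((Finset.mem_singleton.mp hh) ▸ hxB')
  · have hyy : y = y' := by
      have : y' ∈ G.neighborFinset s := hNs' ▸ Finset.mem_insert_self y' {w}
      rw [hNs] at this
      rcases Finset.mem_insert.mp this with hh | hh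
      · exact hh.symm
      · exact absurd (Finset.mem_singleton.mp hh) hyw'
    subst hyy
    exact two_mem_unique hcy hwy hxy hxy'
      (fun hh => hw (hh ▸ hxB)) (fun hh => hw (hh ▸ hxB'))

variable (hn : 6 ≤ Fintype.card V) (h2 : TwoConnected G) (htri : EveryEdgeInTriangle G)

include hn h2 htri in
lemma charge_exists
    (hnofan : ∀ x v y z : V, BadP G x → v ∈ Dst G →
      G.neighborFinset x ∩ Dst G = {v} → G.neighborFinset v = {x, y} →
      G.neighborFinset x \ Dst G = {y, z} → ¬(cD G y = 2 ∧ cD G z = 2))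
    {x : V} (hx : BadP G x) :
    ∃ p : V × V, p.1 ∉ Dst G ∧ ¬ BadP G p.1 ∧ cD G p.1 ≠ 2 ∧ Phi G x p.1 p.2 := by
  obtain ⟨v, y, z, hvD, hyD, hzD, hNxD, hNxW, hNx, hNv, hyz, hxy, hxz, hAdjyz, hyBad⟩ :=
    bad_struct G hn h2 htri hx
  have hxv : G.Adj x v := (G.mem_neighborFinset x v).mp
    (Finset.mem_inter.mp (hNxD ▸ Finset.mem_singleton_self v)).1
  have hvy : G.Adj v y := (G.mem_neighborFinset v y).mp
    (hNv ▸ Finset.mem_insert_of_mem (Finset.mem_singleton_self y))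
  have hdegv : (G.neighborFinset v).card = 2 := by
    rw [G.card_neighborFinset_eq_degree]; exact (mem_Dst G).mp hvD
  by_cases hcy : cD G y = 2
  · -- charge to z, witness u
    have hcz : cD G z ≠ 2 := fun hcz =>
      hnofan x v y z hx hvD hNxD hNv hNxW ⟨hcy, hcz⟩
    have hNyW : G.neighborFinset y \ Dst G = {x, z} := by
      symm
      apply Finset.eq_of_subset_of_card_le
      · intro b hb
        rcases Finset.mem_insert.mp hb with h | h
        · exact h ▸ Finset.mem_sdiff.mpr
            ⟨(G.mem_neighborFinset y x).mpr hxy.symm, hx.1⟩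
        · rw [Finset.mem_singleton] at h
          exact h ▸ Finset.mem_sdiff.mpr ⟨(G.mem_neighborFinset y z).mpr hAdjyz, hzD⟩
      · rw [(by rfl : (G.neighborFinset y \ Dst G).card = cD G y), hcy]
        exact le_of_eq (Finset.card_pair (G.ne_of_adj hxz)).symm
    have hay2 : 2 ≤ aD G y := by
      have hd3 := three_le_degree G hn h2 htri hyD
      have hsum := aD_add_cD G y
      have : aD G y ≠ 1 := fun h1 => hyBad ⟨hyD, h1, hcy⟩
      omega
    have hvy' : v ∈ G.neighborFinset y ∩ Dst G :=
      Finset.mem_inter.mpr ⟨(G.mem_neighborFinset y v).mpr hvy.symm, hvD⟩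
    obtain ⟨u, hu, huv⟩ := Finset.exists_mem_ne
      (by rw [(by rfl : (G.neighborFinset y ∩ Dst G).card = aD G y)]; omega) v
    have huD : u ∈ Dst G := (Finset.mem_inter.mp hu).2
    have huy : G.Adj u y := ((G.mem_neighborFinset y u).mp (Finset.mem_inter.mp hu).1).symm
    obtain ⟨p, hup, hyp, hNup⟩ := partner G htri huD huy
    have hpD : p ∉ Dst G := fun hp => D_indep G hn h2 htri huD hp hup
    have hpmem : p ∈ G.neighborFinset y \ Dst G :=
      Finset.mem_sdiff.mpr ⟨(G.mem_neighborFinset y p).mpr hyp, hpD⟩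
    rw [hNyW] at hpmem
    have hpz : z = p := by
      symm
      rcases Finset.mem_insert.mp hpmem with h | h
      · exfalso
        have : u ∈ G.neighborFinset x ∩ Dst G := Finset.mem_inter.mpr
          ⟨(G.mem_neighborFinset x u).mpr (h ▸ hup).symm, huD⟩
        rw [hNxD, Finset.mem_singleton] at this
        exact huv this
      · exact Finset.mem_singleton.mp h
    subst hpz
    have hdegu : (G.neighborFinset u).card = 2 := by
      rw [G.card_neighborFinset_eq_degree]; exact (mem_Dst G).mp huD
    refine ⟨(z, u), hzD, fun hb => hcz hb.2.2, hcz, hup.symm, huD, hdegu, Or.inr ?_⟩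
    refine ⟨y, by rw [hNup], hyBad, hyz, hcy, ?_, ?_, hx⟩
    · exact Finset.mem_sdiff.mpr ⟨(G.mem_neighborFinset y z).mpr hAdjyz, hzD⟩
    · exact Finset.mem_sdiff.mpr ⟨(G.mem_neighborFinset y x).mpr hxy.symm, hx.1⟩
  · refine ⟨(y, v), hyD, hyBad, hcy, hvy.symm, hvD, hdegv, Or.inl ?_⟩
    exact ⟨hNv ▸ Finset.mem_insert_self x {y},
      hNv ▸ Finset.mem_insert_of_mem (Finset.mem_singleton_self y), hx⟩

lemma double_count (P Q : Finset V) :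
    ∑ a ∈ P, (G.neighborFinset a ∩ Q).card = ∑ b ∈ Q, (G.neighborFinset b ∩ P).card := by
  have hrepr : ∀ (S : Finset V) (a : V),
      G.neighborFinset a ∩ S = S.filter (fun b => G.Adj a b) := by
    intro S a
    ext b
    simp [SimpleGraph.mem_neighborFinset, and_comm]
  calc ∑ a ∈ P, (G.neighborFinset a ∩ Q).card
      = ∑ a ∈ P, ∑ b ∈ Q, if G.Adj a b then 1 else 0 := by
        refine Finset.sum_congr rfl fun a _ => ?_
        rw [hrepr Q a, Finset.card_filter]
    _ = ∑ b ∈ Q, ∑ a ∈ P, if G.Adj a b then 1 else 0 := Finset.sum_comm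
    _ = ∑ b ∈ Q, (G.neighborFinset b ∩ P).card := by
        refine Finset.sum_congr rfl fun b _ => ?_
        rw [hrepr P b, Finset.card_filter]
        refine Finset.sum_congr rfl fun a _ => ?_
        exact if_congr (G.adj_comm a b) rfl rfl

include hn h2 htri in
lemma main_case
    (hcge2 : ∀ w, w ∉ Dst G → 2 ≤ cD G w)
    (hnofan : ∀ x v y z : V, BadP G x → v ∈ Dst G →
      G.neighborFinset x ∩ Dst G = {v} → G.neighborFinset v = {x, y} →
      G.neighborFinset x \ Dst G = {y, z} → ¬(cD G y = 2 ∧ cD G z = 2)) :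
    3 * Fintype.card V ≤ ∑ v, G.degree v := by
  classical
  set Wf := (univ : Finset V) \ Dst G with hWf
  have hmemWf : ∀ {w : V}, w ∈ Wf ↔ w ∉ Dst G := by
    intro w; simp [hWf]
  have hFex : ∀ x, BadP G x → ∃ p : V × V,
      p.1 ∉ Dst G ∧ ¬ BadP G p.1 ∧ cD G p.1 ≠ 2 ∧ Phi G x p.1 p.2 :=
    fun x hx => charge_exists G hn h2 htri hnofan hx
  set F : V → V × V := fun x => if h : BadP G x then Classical.choose (hFex x h) else (x, x)
    with hFdef
  have hFspec : ∀ x (h : BadP G x), (F x).1 ∉ Dst G ∧ ¬ BadP G (F x).1 ∧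
      cD G (F x).1 ≠ 2 ∧ Phi G x (F x).1 (F x).2 := by
    intro x h
    simp only [hFdef, dif_pos h]
    exact Classical.choose_spec (hFex x h)
  set BadF := Wf.filter (fun x => aD G x = 1 ∧ cD G x = 2) with hBadF
  set Rest := Wf.filter (fun x => ¬(aD G x = 1 ∧ cD G x = 2)) with hRest
  have hmemBadF : ∀ {x : V}, x ∈ BadF ↔ BadP G x := by
    intro x
    rw [hBadF, Finset.mem_filter]
    constructor
    · rintro ⟨h1, h2, h3⟩
      exact ⟨hmemWf.mp h1, h2, h3⟩
    · rintro ⟨h1, h2, h3⟩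
      exact ⟨hmemWf.mpr h1, h2, h3⟩
  have hfib : (BadF.card : ℤ) = ∑ w ∈ Rest, ((BadF.filter (fun x => (F x).1 = w)).card : ℤ) := by
    have := Finset.card_eq_sum_card_fiberwise (f := fun x => (F x).1) (s := BadF) (t := Rest)
      (fun x hx => ?_)
    · rw [this]; push_cast; ring
    · have hxBad := hmemBadF.mp hx
      obtain ⟨hD, hB, hc, -⟩ := hFspec x hxBad
      rw [hRest, Finset.mem_coe, Finset.mem_filter]
      exact ⟨hmemWf.mpr hD, fun hpq => hB ⟨hD, hpq.1, hpq.2⟩⟩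
  have hBadsum : ∑ w ∈ BadF, ((aD G w : ℤ) + 2 * (cD G w : ℤ) - 6) = -(BadF.card : ℤ) := by
    rw [Finset.sum_congr rfl (g := fun _ => (-1 : ℤ)) (fun w hw => by
      obtain ⟨-, h1, h2⟩ := Finset.mem_filter.mp hw
      rw [h1, h2]; norm_num)]
    simp [mul_comm]
  have hpoint : ∀ w ∈ Rest,
      ((BadF.filter (fun x => (F x).1 = w)).card : ℤ) ≤ (aD G w : ℤ) + 2 * (cD G w : ℤ) - 6 := by
    intro w hw
    obtain ⟨hwWf, hwnp⟩ := Finset.mem_filter.mp hw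
    have hwD : w ∉ Dst G := hmemWf.mp hwWf
    have hwBad : ¬ BadP G w := fun hb => hwnp ⟨hb.2.1, hb.2.2⟩
    have hc2 := hcge2 w hwD
    by_cases hfe : (BadF.filter (fun x => (F x).1 = w)).Nonempty
    · obtain ⟨x0, hx0⟩ := hfe
      obtain ⟨hx0B, hx0w⟩ := Finset.mem_filter.mp hx0
      have hx0Bad : BadP G x0 := hmemBadF.mp hx0B
      have hcw : cD G w ≠ 2 := hx0w ▸ (hFspec x0 hx0Bad).2.2.1
      have hinj : (BadF.filter (fun x => (F x).1 = w)).card ≤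
          (G.neighborFinset w ∩ Dst G).card := by
        apply Finset.card_le_card_of_injOn (fun x => (F x).2)
        · intro x hx
          obtain ⟨hxB, hxw⟩ := Finset.mem_filter.mp hx
          have hxBad := hmemBadF.mp hxB
          have hPhi := (hFspec x hxBad).2.2.2
          rw [hxw] at hPhi
          exact Finset.mem_inter.mpr
            ⟨(G.mem_neighborFinset w (F x).2).mpr hPhi.1, hPhi.2.1⟩
        · intro x hx x' hx' heq
          obtain ⟨hxB, hxw⟩ := Finset.mem_filter.mp hx
          obtain ⟨hxB', hxw'⟩ := Finset.mem_filter.mp hx'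
          have hP1 := (hFspec x (hmemBadF.mp hxB)).2.2.2
          have hP2 := (hFspec x' (hmemBadF.mp hxB')).2.2.2
          rw [hxw] at hP1
          rw [hxw'] at hP2
          have heq' : (F x).2 = (F x').2 := heq
          rw [heq'] at hP1
          exact Phi_inj G hwBad hP1 hP2
      have hinj' : (BadF.filter (fun x => (F x).1 = w)).card ≤ aD G w := hinj
      have hcw3 : 3 ≤ cD G w := by omega
      push_cast
      omega
    · rw [Finset.not_nonempty_iff_eq_empty] at hfe
      rw [hfe]
      simp only [Finset.card_empty, Nat.cast_zero]
      by_cases hc : cD G w = 2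
      · have ha1 : aD G w ≠ 1 := fun h1 => hwBad ⟨hwD, h1, hc⟩
        have ha0 : aD G w ≠ 0 := by
          intro h0
          have hdd := aD_add_cD G w
          rw [h0, hc] at hdd
          exact hwD ((mem_Dst G).mpr hdd.symm)
        push_cast
        omega
      · push_cast
        omega
  have hkey : 0 ≤ ∑ w ∈ Wf, ((aD G w : ℤ) + 2 * (cD G w : ℤ) - 6) := by
    rw [← Finset.sum_filter_add_sum_filter_not Wf (fun x => aD G x = 1 ∧ cD G x = 2)]
    rw [← hBadF, ← hRest, hBadsum]
    have := Finset.sum_le_sum hpoint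
    rw [← hfib] at this
    omega
  have hdc : ∑ w ∈ Wf, aD G w = 2 * (Dst G).card := by
    have hdceq := double_count G Wf (Dst G)
    have : ∑ w ∈ Wf, aD G w = ∑ v ∈ Dst G, (G.neighborFinset v ∩ Wf).card := hdceq
    rw [this, Finset.sum_congr rfl (g := fun _ => 2) (fun v hv => ?_)]
    · rw [Finset.sum_const, smul_eq_mul, mul_comm]
    · have hNsub : G.neighborFinset v ⊆ Wf := by
        intro u hu
        have : ¬ u ∈ Dst G := fun huD =>
          D_indep G hn h2 htri hv huD ((G.mem_neighborFinset v u).mp hu)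
        exact hmemWf.mpr this
      rw [Finset.inter_eq_left.mpr hNsub, G.card_neighborFinset_eq_degree]
      exact (mem_Dst G).mp hv
  have hdegD : ∑ v ∈ Dst G, G.degree v = 2 * (Dst G).card := by
    rw [Finset.sum_congr rfl (g := fun _ => 2) (fun v hv => (mem_Dst G).mp hv),
      Finset.sum_const, smul_eq_mul, mul_comm]
  have htot : ∑ w ∈ Wf, G.degree w + ∑ v ∈ Dst G, G.degree v = ∑ v, G.degree v :=
    Finset.sum_sdiff (Finset.subset_univ _)
  have hWfdeg : ∑ w ∈ Wf, G.degree w = ∑ w ∈ Wf, aD G w + ∑ w ∈ Wf, cD G w := by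
    rw [← Finset.sum_add_distrib]
    exact Finset.sum_congr rfl fun w _ => (aD_add_cD G w).symm
  have hcards : Wf.card + (Dst G).card = Fintype.card V := by
    rw [hWf, Finset.card_sdiff_of_subset (Finset.subset_univ _), Finset.card_univ]
    have := Finset.card_le_univ (Dst G)
    omega
  have hexp : ∑ w ∈ Wf, ((aD G w : ℤ) + 2 * (cD G w : ℤ) - 6)
      = (∑ w ∈ Wf, aD G w : ℤ) + 2 * (∑ w ∈ Wf, cD G w : ℤ) - 6 * Wf.card := by
    rw [Finset.sum_sub_distrib, Finset.sum_add_distrib, ← Finset.mul_sum, Finset.sum_const]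
    push_cast
    ring
  rw [hexp] at hkey
  have hkeyN : 6 * Wf.card ≤ ∑ w ∈ Wf, aD G w + 2 * ∑ w ∈ Wf, cD G w := by
    have : (6 * Wf.card : ℤ) ≤ (∑ w ∈ Wf, aD G w : ℤ) + 2 * (∑ w ∈ Wf, cD G w : ℤ) := by
      omega
    exact_mod_cast this
  omega

include hn h2 htri in
lemma key_bound : 3 * Fintype.card V ≤ ∑ v, G.degree v := by
  by_cases hbook : ∃ x, x ∉ Dst G ∧ cD G x ≤ 1
  · obtain ⟨x, hx1, hx2⟩ := hbook
    exact book_case G hn h2 htri hx1 hx2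
  · by_cases hfan : ∃ x v y z : V, BadP G x ∧ v ∈ Dst G ∧
        G.neighborFinset x ∩ Dst G = {v} ∧ G.neighborFinset v = {x, y} ∧
        G.neighborFinset x \ Dst G = {y, z} ∧ cD G y = 2 ∧ cD G z = 2
    · obtain ⟨x, v, y, z, hb, h1', h2', h3', h4', h5', h6'⟩ := hfan
      exact fan_case G hn h2 htri hb h1' h2' h3' h4' h5' h6'
    · apply main_case G hn h2 htri
      · intro w hw
        by_contra hcle
        exact hbook ⟨w, hw, by omega⟩
      · intro x v y z hb h1' h2' h3' h4'
        rintro ⟨hcy, hcz⟩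
        exact hfan ⟨x, v, y, z, hb, h1', h2', h3', h4', hcy, hcz⟩

end Main2



end AuxProof

/-- A 2-connected graph of order `n ≥ 6` in which every edge lies in a
triangle has at least `⌈3n/2⌉` edges. -/
theorem stmt_0 {V : Type*} (G : SimpleGraph V)
    (hn : 6 ≤ Nat.card V) (h2 : TwoConnected G) (htri : EveryEdgeInTriangle G) :
    (3 * Nat.card V + 1) / 2 ≤ numEdges G := by
  have hfin : Finite V := by
    by_contra hinf
    rw [not_finite_iff_infinite] at hinf
    rw [Nat.card_eq_zero_of_infinite] at hn
    omega
  letI : Fintype V := Fintype.ofFinite V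
  letI : DecidableEq V := Classical.decEq V
  letI : DecidableRel G.Adj := Classical.decRel _
  rw [Nat.card_eq_fintype_card] at hn ⊢
  have hkey := key_bound G hn h2 htri
  rw [G.sum_degrees_eq_twice_card_edges] at hkey
  have hedges : numEdges G = G.edgeFinset.card := by
    rw [numEdges, Nat.card_coe_set_eq, Set.ncard_eq_toFinset_card']
    congr 1
  rw [hedges]
  omega
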